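/- Let m be a positive integer, b a nonzero real number, and n a positive integer. Then the depth-1 S-sum S_m(b;n) = Σ_{i=1}^{n} b^i/i^m has the iterated integral representation S_m(b;n) = ∫_0^b (1/x_m) ∫_0^{x_m} (1/x_{m−1}) ⋯ ∫_0^{x_3} (1/x_2) ∫_0^{x_2} (x_1^n − 1)/(x_1 − 1) dx_1 dx_2 ⋯ dx_m; in particular, for m=1, S_1(b;n) = ∫_0^b (x^n − 1)/(x − 1) dx. -/

import Mathlib

open intervalIntegral

/-- The generalized harmonic sum (`S`-sum). -/
noncomputable def Ssum : List (ℕ × ℝ) → ℕ → ℝ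
  | [], _ => 1
  | (a, x) :: p, n => ∑ i ∈ Finset.Icc 1 n, x ^ i / (i : ℝ) ^ a * Ssum p i

/-- The iterated integral
`Jint m n b = ∫_0^b (1/x_m) ∫_0^{x_m} (1/x_{m−1}) ⋯ ∫_0^{x_2} (x₁^n−1)/(x₁−1) dx₁ ⋯ dx_m`
(oriented integrals). -/
noncomputable def Jint : ℕ → ℕ → ℝ → ℝ
  | 0, _, _ => 0
  | 1, n, b => ∫ x in (0:ℝ)..b, (x ^ n - 1) / (x - 1)
  | (m + 2), n, b => ∫ x in (0:ℝ)..b, (1 / x) * Jint (m + 1) n x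


open MeasureTheory in
private lemma ae_ne_real (c : ℝ) : ∀ᵐ x : ℝ, x ≠ c := by
  rw [MeasureTheory.ae_iff]
  simp [Real.volume_singleton]

private lemma sum_reindex (n : ℕ) (f : ℕ → ℝ) :
    ∑ i ∈ Finset.Icc 1 n, f i = ∑ i ∈ Finset.range n, f (i + 1) := by
  induction n with
  | zero => simp
  | succ k ih => rw [Finset.sum_Icc_succ_top (by omega), ih, Finset.sum_range_succ]

private lemma jint_base (n : ℕ) (b : ℝ) :
    Jint 1 n b = ∑ i ∈ Finset.Icc 1 n, b ^ i / (i : ℝ) ^ 1 := by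
  have hcong : ∫ x in (0:ℝ)..b, (x ^ n - 1) / (x - 1)
      = ∫ x in (0:ℝ)..b, ∑ i ∈ Finset.range n, x ^ i := by
    apply intervalIntegral.integral_congr_ae
    filter_upwards [ae_ne_real 1] with x hx _
    rw [geom_sum_eq hx]
  rw [Jint, hcong, intervalIntegral.integral_finset_sum
    (fun i _ => intervalIntegral.intervalIntegrable_pow i)]
  rw [sum_reindex]
  refine Finset.sum_congr rfl fun i _ => ?_
  rw [integral_pow]
  push_cast
  ring

private lemma jint_eq (n : ℕ) : ∀ m b, Jint (m + 1) n b
    = ∑ i ∈ Finset.Icc 1 n, b ^ i / (i : ℝ) ^ (m + 1) := by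
  intro m
  induction m with
  | zero => exact fun b => jint_base n b
  | succ k ih =>
    intro b
    have hcong : ∫ x in (0:ℝ)..b, (1 / x) * Jint (k + 1) n x
        = ∫ x in (0:ℝ)..b, ∑ i ∈ Finset.Icc 1 n, x ^ (i - 1) / (i : ℝ) ^ (k + 1) := by
      apply intervalIntegral.integral_congr_ae
      filter_upwards [ae_ne_real 0] with x hx _
      rw [ih x, Finset.mul_sum]
      refine Finset.sum_congr rfl fun i hi => ?_
      have hi1 : 1 ≤ i := (Finset.mem_Icc.mp hi).1
      have : x ^ i = x * x ^ (i - 1) := by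
        rw [← pow_succ']
        congr 1
        omega
      rw [this]
      field_simp
    show (∫ x in (0:ℝ)..b, (1 / x) * Jint (k + 1) n x) = _
    rw [hcong, intervalIntegral.integral_finset_sum
      (fun i _ => (intervalIntegral.intervalIntegrable_pow (i-1)).div_const _)]
    refine Finset.sum_congr rfl fun i hi => ?_
    have hi1 : 1 ≤ i := (Finset.mem_Icc.mp hi).1
    rw [intervalIntegral.integral_div, integral_pow]
    have h1 : i - 1 + 1 = i := by omega
    rw [h1, zero_pow (by omega : i ≠ 0), Nat.cast_sub hi1]
    have hi0 : (i:ℝ) ≠ 0 := Nat.cast_ne_zero.mpr (by omega)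
    field_simp
    simp only [Nat.cast_one, sub_add_cancel, sub_zero]
    rw [pow_succ, ← mul_assoc, mul_div_assoc, div_self hi0, mul_one]

/-- Iterated integral representation of the depth-1 `S`-sum `S_m(b;n)`;
in particular for `m = 1`, `S_1(b;n) = ∫_0^b (x^n − 1)/(x − 1) dx`. -/
theorem ssum_depth_one_integral_rep (m : ℕ) (hm : 1 ≤ m) (b : ℝ) (hb : b ≠ 0)
    (n : ℕ) (hn : 1 ≤ n) :
    Ssum [(m, b)] n = Jint m n b ∧
    Ssum [(1, b)] n = ∫ x in (0:ℝ)..b, (x ^ n - 1) / (x - 1) := by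
  obtain ⟨k, rfl⟩ : ∃ k, m = k + 1 := ⟨m - 1, by omega⟩
  constructor
  · rw [jint_eq]
    simp [Ssum]
  · rw [show (∫ x in (0:ℝ)..b, (x ^ n - 1) / (x - 1)) = Jint 1 n b by simp [Jint],
      jint_eq n 0 b]
    simp [Ssum]
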